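/- For any prime p > 3, sum_{k=1}^{p-1} H_k/k^2 ≡ B_{p-3} (mod p) and sum_{k=1}^{p-1} H_k^{(2)}/k ≡ -B_{p-3} (mod p), where H_k = sum_{i=1}^k 1/i. -/

import Mathlib

open Finset
section
variable {p : ℕ} [hp : Fact p.Prime]

/-- "x ≡ 0 mod p" for rationals, p-adically. -/
def Cz (p : ℕ) [Fact p.Prime] (x : ℚ) : Prop := ‖(x : ℚ_[p])‖ ≤ (p:ℝ)⁻¹

lemma Cz_int (n : ℤ) (h : (n : ZMod p) = 0) : Cz p (n : ℚ) := by
  have hd : (p:ℤ) ∣ n := (ZMod.intCast_zmod_eq_zero_iff_dvd n p).mp h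
  have := (Padic.norm_int_le_pow_iff_dvd (p := p) n 1).mpr (by simpa using hd)
  unfold Cz
  rw [show ((n:ℚ) : ℚ_[p]) = ((n:ℤ) : ℚ_[p]) by push_cast; ring]
  simpa [zpow_neg] using this

lemma Cz_add {x y : ℚ} (hx : Cz p x) (hy : Cz p y) : Cz p (x + y) := by
  unfold Cz at *
  push_cast
  calc ‖(x:ℚ_[p]) + (y:ℚ_[p])‖ ≤ max ‖(x:ℚ_[p])‖ ‖(y:ℚ_[p])‖ := Padic.nonarchimedean _ _
  _ ≤ (p:ℝ)⁻¹ := max_le hx hy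

lemma Cz_mul {x y : ℚ} (hx : Cz p x) (hy : ‖(y : ℚ_[p])‖ ≤ 1) : Cz p (x * y) := by
  unfold Cz at *
  push_cast
  rw [norm_mul]
  have h0 : (0:ℝ) ≤ (p:ℝ)⁻¹ := by positivity
  have := mul_le_mul hx hy (norm_nonneg _) h0
  simpa using this

lemma Cz_sum {ι : Type*} (s : Finset ι) (f : ι → ℚ) (h : ∀ i ∈ s, Cz p (f i)) :
    Cz p (∑ i ∈ s, f i) := by
  classical
  induction s using Finset.induction with
  | empty => unfold Cz; simp
  | insert _ _ hx ih =>
      rw [Finset.sum_insert hx]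
      exact Cz_add (h _ (Finset.mem_insert_self _ _))
        (ih fun i hi => h i (Finset.mem_insert_of_mem hi))
section
variable {p : ℕ} [hp : Fact p.Prime]

lemma norm_nat_le_one (n : ℕ) : ‖((n:ℚ) : ℚ_[p])‖ ≤ 1 := by
  rw [show ((n:ℚ):ℚ_[p]) = ((n:ℤ):ℚ_[p]) by push_cast; ring]
  exact Padic.norm_int_le_one _

lemma norm_nat_unit {n : ℕ} (h : ¬ p ∣ n) : ‖((n:ℚ) : ℚ_[p])‖ = 1 := by
  rw [show ((n:ℚ):ℚ_[p]) = ((n:ℤ):ℚ_[p]) by push_cast; ring]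
  refine le_antisymm (Padic.norm_int_le_one _) ?_
  by_contra hlt
  push_neg at hlt
  exact h (by exact_mod_cast (Padic.norm_intCast_lt_one_iff (p := p) (k := (n:ℤ))).mp hlt)

lemma zmod_sum_pow (E : ℕ) (hE : 1 ≤ E) :
    ∑ x : ZMod p, x ^ E = if (p-1) ∣ E then -1 else 0 := by
  classical
  have h0 : (0:ZMod p)^E = 0 := zero_pow (by omega)
  let φ : (ZMod p)ˣ ↪ ZMod p := ⟨fun x ↦ x, fun _ _ h => Units.ext h⟩
  have hmap : univ.map φ = univ \ {0} := by
    ext x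
    simp only [mem_map, mem_univ, Function.Embedding.coeFn_mk, true_and, mem_sdiff,
      mem_singleton, φ]; exact isUnit_iff_ne_zero
  calc ∑ x : ZMod p, x ^ E = ∑ x ∈ univ \ {(0:ZMod p)}, x ^ E := by
        rw [← Finset.sum_sdiff (Finset.subset_univ {0}), Finset.sum_singleton, h0, add_zero]
      _ = ∑ x : (ZMod p)ˣ, ((x:ZMod p)) ^ E := by rw [← hmap, Finset.sum_map]; rfl
      _ = _ := by have := FiniteField.sum_pow_units (ZMod p) E; rwa [ZMod.card p] at this

lemma icc_sum_pow (E : ℕ) (hE : 1 ≤ E) :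
    (∑ k ∈ Icc 1 (p-1), ((k : ZMod p))^E) = if (p-1) ∣ E then -1 else 0 := by
  classical
  have hp2 : 2 ≤ p := hp.out.two_le
  rw [← zmod_sum_pow E hE]
  have h0 : (0:ZMod p)^E = 0 := zero_pow (by omega)
  have : ∑ x : ZMod p, x ^ E = ∑ x ∈ univ \ {(0:ZMod p)}, x ^ E := by
    rw [← Finset.sum_sdiff (Finset.subset_univ {0}), Finset.sum_singleton, h0, add_zero]
  rw [this]
  refine Finset.sum_nbij' (fun k => ((k : ZMod p))) (fun x => x.val) ?_ ?_ ?_ ?_ ?_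
  · intro k hk
    simp only [mem_Icc] at hk
    simp only [mem_sdiff, mem_univ, mem_singleton, true_and]
    intro h0'
    rw [ZMod.natCast_eq_zero_iff] at h0'
    have hdvd := h0'
    have := Nat.le_of_dvd (by omega) hdvd
    omega
  · intro x hx
    simp only [mem_sdiff, mem_univ, mem_singleton, true_and] at hx
    have h1 : x.val ≠ 0 := fun h => hx ((ZMod.val_eq_zero x).mp h)
    have h2 : x.val < p := ZMod.val_lt x
    simp only [mem_Icc]; omega
  · intro k hk
    simp only [mem_Icc] at hk
    exact ZMod.val_cast_of_lt (by omega)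
  · intro x hx
    exact ZMod.natCast_zmod_val x
  · intro k hk; rfl

lemma sum_Icc_one_eq_sum_range {M : Type*} [AddCommMonoid M] (f : ℕ → M) (h0 : f 0 = 0) (n : ℕ) :
    ∑ i ∈ Icc 1 n, f i = ∑ i ∈ range (n+1), f i := by
  have hins : range (n+1) = insert 0 (Icc 1 n) := by
    ext x; simp only [mem_range, mem_insert, mem_Icc, Nat.lt_succ_iff]; omega
  rw [hins, Finset.sum_insert (by simp), h0, zero_add]

lemma Cz_powsum (E : ℕ) (hE : 1 ≤ E) (hnd : ¬ (p-1) ∣ E) :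
    Cz p (∑ k ∈ Icc 1 (p-1), (k:ℚ)^E) := by
  have hc : ((∑ k ∈ Icc 1 (p-1), (k:ℤ)^E : ℤ) : ℚ) = ∑ k ∈ Icc 1 (p-1), (k:ℚ)^E := by
    push_cast; rfl
  rw [← hc]
  apply Cz_int
  have hc2 : ((∑ k ∈ Icc 1 (p-1), (k:ℤ)^E : ℤ) : ZMod p) = ∑ k ∈ Icc 1 (p-1), ((k:ZMod p))^E := by
    push_cast; rfl
  rw [hc2, icc_sum_pow E hE, if_neg hnd]

lemma Cz_p_pow (e : ℕ) (he : 1 ≤ e) : Cz p ((p:ℚ)^e) := by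
  unfold Cz; push_cast; rw [norm_pow, Padic.norm_p]
  have h1 : (p:ℝ)⁻¹ ≤ 1 := by
    rw [inv_le_one_iff₀]
    right; exact_mod_cast hp.out.one_lt.le
  calc ((p:ℝ)⁻¹)^e ≤ ((p:ℝ)⁻¹)^1 := pow_le_pow_of_le_one (by positivity) h1 he
  _ = _ := pow_one _

lemma norm_mul_div_le_one {x y z : ℚ} (hx : ‖(x:ℚ_[p])‖ ≤ 1) (hy : ‖(y:ℚ_[p])‖ ≤ 1)
    (hz : ‖(z:ℚ_[p])‖ = 1) : ‖((x*y/z : ℚ) : ℚ_[p])‖ ≤ 1 := by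
  push_cast
  rw [norm_div, norm_mul, hz, div_one]
  exact mul_le_one₀ hx (norm_nonneg _) hy

lemma not_dvd_of_lt {n : ℕ} (h1 : 1 ≤ n) (h2 : n ≤ p - 1) : ¬ p ∣ n := by
  intro h
  have := Nat.le_of_dvd (by omega) h
  have := hp.out.two_le
  omega

lemma bernoulli_padic_int (m : ℕ) (hm : m ≤ p - 2) : ‖((bernoulli m : ℚ) : ℚ_[p])‖ ≤ 1 := by
  induction m using Nat.strong_induction_on with
  | _ m ih =>
  have hp2 : 2 ≤ p := hp.out.two_le
  rcases Nat.eq_zero_or_pos m with h0 | h1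
  · subst h0; simp
  · have hm1 : ¬ p ∣ (m+1) := not_dvd_of_lt (by omega) (by omega)
    have key : (p:ℚ) * bernoulli m =
        (∑ k ∈ Finset.range p, (k:ℚ)^m)
        - ∑ i ∈ Finset.range m, bernoulli i * ((m+1).choose i) * (p:ℚ)^(m+1-i) / (m+1) := by
      have hF := sum_range_pow p m
      rw [Finset.sum_range_succ] at hF
      have hlast : bernoulli m * (((m+1).choose m : ℕ) : ℚ) * (p:ℚ)^(m+1-m) / ((m:ℚ)+1)
          = (p:ℚ) * bernoulli m := by
        rw [show m+1-m = 1 by omega, Nat.choose_succ_self_right]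
        have : ((m:ℚ)+1) ≠ 0 := by positivity
        field_simp
        push_cast; ring
      rw [hlast] at hF
      rw [hF]; ring
    have hrhs : Cz p ((∑ k ∈ Finset.range p, (k:ℚ)^m)
        - ∑ i ∈ Finset.range m, bernoulli i * ((m+1).choose i) * (p:ℚ)^(m+1-i) / (m+1)) := by
      rw [sub_eq_add_neg]
      apply Cz_add
      · have hR : ∑ k ∈ Finset.range ((p-1)+1), ((k:ℚ))^m = ∑ k ∈ Icc 1 (p-1), (k:ℚ)^m :=
          (sum_Icc_one_eq_sum_range (fun k => ((k:ℕ):ℚ)^m)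
            (by norm_num [zero_pow (show m ≠ 0 by omega)]) (p-1)).symm
        rw [show Finset.range p = Finset.range ((p-1)+1) by congr 1; omega, hR]
        exact Cz_powsum m h1 (by intro hd; have := Nat.le_of_dvd h1 hd; omega)
      · rw [neg_eq_neg_one_mul, Finset.mul_sum]
        apply Cz_sum
        intro i hi
        simp only [Finset.mem_range] at hi
        have hterm : (-1 : ℚ) * (bernoulli i * ((m+1).choose i) * (p:ℚ)^(m+1-i) / (m+1))
            = (p:ℚ)^(m+1-i) * ((-1) * bernoulli i * (((m+1).choose i : ℕ):ℚ) / ((m:ℚ)+1)) := by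
          ring
        rw [hterm]
        apply Cz_mul (Cz_p_pow (m+1-i) (by omega))
        have hb : ‖(((-1:ℚ) * bernoulli i : ℚ) : ℚ_[p])‖ ≤ 1 := by
          push_cast
          rw [norm_mul, norm_neg, norm_one, one_mul]
          exact ih i hi (by omega)
        have hz : ‖((((m:ℚ)+1) : ℚ) : ℚ_[p])‖ = 1 := by
          have := norm_nat_unit (p := p) (n := m+1) hm1
          push_cast at this; exact this
        exact norm_mul_div_le_one hb (norm_nat_le_one _) hz
    rw [← key] at hrhs
    unfold Cz at hrhs
    push_cast at hrhs
    rw [norm_mul, Padic.norm_p] at hrhs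
    have hppos : (0:ℝ) < (p:ℝ)⁻¹ := by positivity
    calc ‖((bernoulli m : ℚ) : ℚ_[p])‖ = ((p:ℝ)⁻¹)⁻¹ * ((p:ℝ)⁻¹ * ‖((bernoulli m : ℚ) : ℚ_[p])‖) := by
          field_simp
    _ ≤ ((p:ℝ)⁻¹)⁻¹ * (p:ℝ)⁻¹ := by
          apply mul_le_mul_of_nonneg_left hrhs (by positivity)
    _ = 1 := by field_simp

lemma Cz_of_eq {x y : ℚ} (h : x = y) (hy : Cz p y) : Cz p x := h ▸ hy

lemma Cz_mul_congr {x x' y y' : ℚ} (hx : Cz p (x - x')) (hy : Cz p (y - y'))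
    (hxn : ‖(x:ℚ_[p])‖ ≤ 1) (hy'n : ‖(y':ℚ_[p])‖ ≤ 1) : Cz p (x*y - x'*y') := by
  have h : x*y - x'*y' = (y - y')*x + (x - x')*y' := by ring
  rw [h]
  exact Cz_add (Cz_mul hy hxn) (Cz_mul hx hy'n)

lemma norm_nat_unit' {n : ℕ} (h : ¬ p ∣ n) : ‖(n : ℚ_[p])‖ = 1 := by
  have := norm_nat_unit (p := p) h
  push_cast at this
  exact this

lemma norm_inv_pow (a i : ℕ) (hi1 : 1 ≤ i) (hi2 : i ≤ p-1) :
    ‖((1/(i:ℚ)^a : ℚ) : ℚ_[p])‖ = 1 := by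
  push_cast
  rw [norm_div, norm_one, norm_pow, norm_nat_unit' (not_dvd_of_lt hi1 hi2)]
  simp

lemma norm_natpow_le_one (k e : ℕ) : ‖(((k:ℚ)^e : ℚ) : ℚ_[p])‖ ≤ 1 := by
  push_cast
  rw [norm_pow]
  refine pow_le_one₀ (norm_nonneg _) ?_
  have := norm_nat_le_one (p := p) k
  push_cast at this
  exact this

lemma Cz_inv_pow (a i : ℕ) (hi1 : 1 ≤ i) (hi2 : i ≤ p-1) (ha : a ≤ p-1) :
    Cz p (1/(i:ℚ)^a - (i:ℚ)^(p-1-a)) := by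
  have hi0 : (i:ℚ) ≠ 0 := Nat.cast_ne_zero.mpr (by omega)
  have hpow : (i:ℚ)^(p-1-a) * (i:ℚ)^a = (i:ℚ)^(p-1) := by
    rw [← pow_add]; congr 1; omega
  have hsplit : 1/(i:ℚ)^a - (i:ℚ)^(p-1-a) = (1 - (i:ℚ)^(p-1)) * (1/(i:ℚ)^a) := by
    have h2 : (i:ℚ)^(p-1) * (1/(i:ℚ)^a) = (i:ℚ)^(p-1-a) := by
      rw [← hpow]; field_simp
    rw [sub_mul, one_mul, h2]
  rw [hsplit]
  apply Cz_mul
  · have hz : ((1 - (i:ℤ)^(p-1) : ℤ) : ℚ) = 1 - (i:ℚ)^(p-1) := by push_cast; ring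
    rw [← hz]
    apply Cz_int
    have hiz : ((i:ℕ) : ZMod p) ≠ 0 := by
      intro h0
      rw [ZMod.natCast_eq_zero_iff] at h0
      exact not_dvd_of_lt hi1 hi2 h0
    push_cast
    rw [ZMod.pow_card_sub_one_eq_one hiz]
    ring
  · exact le_of_eq (norm_inv_pow a i hi1 hi2)

lemma not_pred_dvd (hp5 : 5 ≤ p) {E : ℕ} (h1 : p-2 ≤ E) (h2 : E ≤ 2*p-4) (h3 : E ≠ p-1) :
    ¬ (p-1) ∣ E := by
  rintro ⟨c, hc⟩
  rcases c with _ | _ | c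
  · omega
  · omega
  · have hm : (p-1)*2 ≤ (p-1)*(c+1+1) := Nat.mul_le_mul_left (p-1) (by omega)
    omega

lemma key_cong (hp3 : 3 < p) (a : ℕ) (ha1 : 1 ≤ a) (ha2 : a ≤ 2) (v : ℤ)
    (hv : (((p-a).choose (p-3) : ℕ) : ZMod p) * (-1) = (v : ZMod p) * ((p-a : ℕ) : ZMod p)) :
    Cz p ((∑ k ∈ Icc 1 (p-1), (∑ i ∈ Icc 1 k, 1/(i:ℚ)^a) / (k:ℚ)^(3-a))
      - v * bernoulli (p-3)) := by
  have hp5 : 5 ≤ p := by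
    rcases eq_or_ne p 4 with rfl | h
    · exact absurd hp.out (by norm_num)
    · omega
  set b := 3 - a with hb
  set ea := p - 1 - a with hea
  set eb := p - 1 - b with heb
  -- X as a double sum of products
  have hX : (∑ k ∈ Icc 1 (p-1), (∑ i ∈ Icc 1 k, 1/(i:ℚ)^a) / (k:ℚ)^b)
      = ∑ k ∈ Icc 1 (p-1), ∑ i ∈ Icc 1 k, (1/(i:ℚ)^a) * (1/(k:ℚ)^b) := by
    refine Finset.sum_congr rfl fun k hk => ?_
    rw [Finset.sum_div]
    exact Finset.sum_congr rfl fun i _ => by ring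
  -- step A : replace inverses by powers
  have hA : Cz p ((∑ k ∈ Icc 1 (p-1), ∑ i ∈ Icc 1 k, (1/(i:ℚ)^a) * (1/(k:ℚ)^b))
      - ∑ k ∈ Icc 1 (p-1), ∑ i ∈ Icc 1 k, (i:ℚ)^ea * (k:ℚ)^eb) := by
    rw [← Finset.sum_sub_distrib]
    apply Cz_sum; intro k hk
    rw [← Finset.sum_sub_distrib]
    apply Cz_sum; intro i hi
    simp only [Finset.mem_Icc] at hk hi
    exact Cz_mul_congr (Cz_inv_pow a i (by omega) (by omega) (by omega))
      (Cz_inv_pow b k (by omega) (by omega) (by omega))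
      (le_of_eq (norm_inv_pow a i (by omega) (by omega)))
      (norm_natpow_le_one k eb)
  -- step B : split off the diagonal
  have hX2 : (∑ k ∈ Icc 1 (p-1), ∑ i ∈ Icc 1 k, (i:ℚ)^ea * (k:ℚ)^eb)
      = (∑ k ∈ Icc 1 (p-1), (∑ i ∈ range k, (i:ℚ)^ea) * (k:ℚ)^eb)
        + ∑ k ∈ Icc 1 (p-1), (k:ℚ)^(ea+eb) := by
    rw [← Finset.sum_add_distrib]
    refine Finset.sum_congr rfl fun k hk => ?_
    simp only [Finset.mem_Icc] at hk
    rw [← Finset.sum_mul]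
    have h1 : ∑ i ∈ Icc 1 k, ((i:ℚ))^ea = ∑ i ∈ range (k+1), ((i:ℕ):ℚ)^ea :=
      sum_Icc_one_eq_sum_range (fun i => ((i:ℕ):ℚ)^ea)
        (by norm_num [zero_pow (show ea ≠ 0 by omega)]) k
    rw [h1, Finset.sum_range_succ, add_mul, pow_add]
  -- step C : diagonal vanishes
  have hD : Cz p (∑ k ∈ Icc 1 (p-1), (k:ℚ)^(ea+eb)) := by
    refine Cz_powsum _ (by omega) ?_
    exact not_pred_dvd hp5 (by omega) (by omega) (by omega)
  -- step D : Faulhaber on the strict part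
  have hY : (∑ k ∈ Icc 1 (p-1), (∑ i ∈ range k, (i:ℚ)^ea) * (k:ℚ)^eb)
      = ∑ i ∈ range (ea+1), bernoulli i * (((ea+1).choose i : ℕ) : ℚ)
          * (∑ k ∈ Icc 1 (p-1), (k:ℚ)^(ea+1-i+eb)) / ((ea:ℚ)+1) := by
    have hY1 : ∀ k:ℕ, ((∑ i ∈ range k, (i:ℚ)^ea) * (k:ℚ)^eb)
        = ∑ i ∈ range (ea+1), bernoulli i * (((ea+1).choose i : ℕ):ℚ)
            * (k:ℚ)^(ea+1-i+eb) / ((ea:ℚ)+1) := by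
      intro k
      rw [sum_range_pow k ea, Finset.sum_mul]
      refine Finset.sum_congr rfl fun i hi => ?_
      rw [pow_add]
      push_cast
      ring
    rw [Finset.sum_congr rfl (fun k _ => hY1 k), Finset.sum_comm]
    refine Finset.sum_congr rfl fun i _ => ?_
    rw [Finset.mul_sum, Finset.sum_div]
  have hd_unit' : ‖((ea : ℚ_[p]) + 1)‖ = 1 := by
    have h0 := norm_nat_unit (p := p) (n := ea+1) (not_dvd_of_lt (by omega) (by omega))
    push_cast at h0
    exact h0
  have hd_unit : ‖((((ea:ℚ)+1) : ℚ) : ℚ_[p])‖ = 1 := by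
    push_cast
    exact hd_unit'
  -- step E : all non-main terms vanish
  have hmem : p - 3 ∈ range (ea+1) := by rw [Finset.mem_range]; omega
  have hext := Finset.add_sum_erase (range (ea+1))
    (fun i => bernoulli i * (((ea+1).choose i : ℕ):ℚ)
      * (∑ k ∈ Icc 1 (p-1), (k:ℚ)^(ea+1-i+eb)) / ((ea:ℚ)+1)) hmem
  have hErest : Cz p (∑ i ∈ (range (ea+1)).erase (p-3),
      bernoulli i * (((ea+1).choose i : ℕ):ℚ)
        * (∑ k ∈ Icc 1 (p-1), (k:ℚ)^(ea+1-i+eb)) / ((ea:ℚ)+1)) := by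
    apply Cz_sum; intro i hi
    rw [Finset.mem_erase, Finset.mem_range] at hi
    obtain ⟨hine, hirange⟩ := hi
    have hE1 : 1 ≤ ea+1-i+eb := by omega
    have hnd : ¬ (p-1) ∣ (ea+1-i+eb) :=
      not_pred_dvd hp5 (by omega) (by omega) (by omega)
    refine Cz_of_eq (show _ = (∑ k ∈ Icc 1 (p-1), (k:ℚ)^(ea+1-i+eb))
      * (bernoulli i * (((ea+1).choose i : ℕ):ℚ) / ((ea:ℚ)+1)) by ring) ?_
    apply Cz_mul (Cz_powsum _ hE1 hnd)
    exact norm_mul_div_le_one (bernoulli_padic_int i (by omega)) (norm_nat_le_one _) hd_unit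
  -- step F : the main term
  have hmain : Cz p (bernoulli (p-3) * (((ea+1).choose (p-3) : ℕ):ℚ)
      * (∑ k ∈ Icc 1 (p-1), (k:ℚ)^(ea+1-(p-3)+eb)) / ((ea:ℚ)+1) - (v:ℚ) * bernoulli (p-3)) := by
    have hEW : ea+1-(p-3)+eb = p-1 := by omega
    rw [hEW]
    set Wz : ℤ := ∑ k ∈ Icc 1 (p-1), (k:ℤ)^(p-1) with hWz
    set N : ℤ := ((ea+1).choose (p-3) : ℤ) * Wz - v * ((p - a : ℕ) : ℤ) with hN
    have hNzero : (N : ZMod p) = 0 := by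
      have hWmod : ((Wz : ℤ) : ZMod p) = -1 := by
        rw [hWz]
        push_cast
        rw [icc_sum_pow (p-1) (by omega), if_pos dvd_rfl]
      have hsplitN : ((N:ℤ):ZMod p) = ((((ea+1).choose (p-3) : ℕ)) : ZMod p) * ((Wz:ℤ):ZMod p)
          - (v : ZMod p) * (((p-a:ℕ):ℕ) : ZMod p) := by
        rw [hN]; push_cast; ring
      rw [hsplitN, hWmod, show ea + 1 = p - a by omega, hv]
      ring
    have hWcast : ((Wz : ℤ) : ℚ) = ∑ k ∈ Icc 1 (p-1), (k:ℚ)^(p-1) := by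
      rw [hWz]; push_cast; rfl
    have hd0 : ((ea:ℚ)+1) ≠ 0 := by positivity
    have hpa : ((p-a : ℕ) : ℚ) = (ea:ℚ)+1 := by
      have : p - a = ea + 1 := by omega
      rw [this]; push_cast; ring
    have hrel : bernoulli (p-3) * (((ea+1).choose (p-3) : ℕ):ℚ)
          * (∑ k ∈ Icc 1 (p-1), (k:ℚ)^(p-1)) / ((ea:ℚ)+1) - (v:ℚ) * bernoulli (p-3)
        = (N:ℚ) * (bernoulli (p-3) / ((ea:ℚ)+1)) := by
      rw [← hWcast, hN]
      push_cast
      rw [hpa]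
      field_simp
    rw [hrel]
    apply Cz_mul (Cz_int N hNzero)
    push_cast
    rw [norm_div, hd_unit', div_one]
    exact bernoulli_padic_int (p-3) (by omega)
  -- assemble
  refine Cz_of_eq (show _ =
      ((∑ k ∈ Icc 1 (p-1), ∑ i ∈ Icc 1 k, (1/(i:ℚ)^a) * (1/(k:ℚ)^b))
        - ∑ k ∈ Icc 1 (p-1), ∑ i ∈ Icc 1 k, (i:ℚ)^ea * (k:ℚ)^eb)
      + ((∑ i ∈ (range (ea+1)).erase (p-3),
          bernoulli i * (((ea+1).choose i : ℕ):ℚ)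
            * (∑ k ∈ Icc 1 (p-1), (k:ℚ)^(ea+1-i+eb)) / ((ea:ℚ)+1))
        + ((∑ k ∈ Icc 1 (p-1), (k:ℚ)^(ea+eb))
          + (bernoulli (p-3) * (((ea+1).choose (p-3) : ℕ):ℚ)
              * (∑ k ∈ Icc 1 (p-1), (k:ℚ)^(ea+1-(p-3)+eb)) / ((ea:ℚ)+1)
            - (v:ℚ) * bernoulli (p-3)))) from ?_) ?_
  · rw [hX, hX2, hY, ← hext]
    ring
  · exact Cz_add hA (Cz_add hErest (Cz_add hD hmain))
end

/-- `harmonic' k m` is the `k`-th harmonic number of order `m`: `∑_{i=1}^k 1/i^m`. -/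
def harmonic' (k m : ℕ) : ℚ := ∑ i ∈ Finset.Icc 1 k, 1 / (i : ℚ) ^ m

theorem stmt_18 (p : ℕ) [hp : Fact p.Prime] (hp3 : 3 < p) :
    ‖((∑ k ∈ Finset.Icc 1 (p - 1), harmonic' k 1 / (k : ℚ) ^ 2
        - bernoulli (p - 3) : ℚ) : ℚ_[p])‖ ≤ (p : ℝ) ^ (-1 : ℤ) ∧
    ‖((∑ k ∈ Finset.Icc 1 (p - 1), harmonic' k 2 / (k : ℚ)
        - (-(bernoulli (p - 3))) : ℚ) : ℚ_[p])‖ ≤ (p : ℝ) ^ (-1 : ℤ) := by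
  have hp5 : 5 ≤ p := by
    rcases eq_or_ne p 4 with rfl | h
    · exact absurd hp.out (by norm_num)
    · omega
  have hself : ((p:ℕ) : ZMod p) = 0 := ZMod.natCast_self p
  have hm1 : ((p-1:ℕ) : ZMod p) = -1 := by
    rw [Nat.cast_sub (by omega), hself]; ring
  have hm2 : ((p-2:ℕ) : ZMod p) = -2 := by
    rw [Nat.cast_sub (by omega), hself]; push_cast; ring
  have h2ne : (2 : ZMod p) ≠ 0 := by
    have h : ((2:ℕ) : ZMod p) ≠ 0 := by
      intro hd
      rw [ZMod.natCast_eq_zero_iff] at hd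
      have := Nat.le_of_dvd (by omega) hd
      omega
    simpa using h
  have hc1 : (((p-1).choose (p-3) : ℕ) : ZMod p) * (-1)
      = ((1:ℤ) : ZMod p) * ((p-1 : ℕ) : ZMod p) := by
    have hsymm : (p-1).choose (p-3) = (p-1).choose 2 := by
      rw [show p-3 = (p-1) - 2 by omega]
      exact Nat.choose_symm (by omega)
    have hev : 2 ∣ (p-1)*(p-2) := by
      rw [mul_comm, show p-1 = (p-2)+1 by omega]
      exact (Nat.even_mul_succ_self (p-2)).two_dvd
    have h2 : (p-1).choose 2 * 2 = (p-1) * (p-2) := by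
      rw [Nat.choose_two_right, show p-1-1 = p-2 by omega]
      exact Nat.div_mul_cancel hev
    have hz : (((p-1).choose 2 : ℕ) : ZMod p) * 2 = ((p-1:ℕ):ZMod p) * ((p-2:ℕ):ZMod p) := by
      have := congrArg (fun n : ℕ => ((n : ZMod p))) h2
      push_cast at this
      exact this
    rw [hm1, hm2] at hz
    have hch1 : (((p-1).choose 2 : ℕ) : ZMod p) = 1 := by
      apply mul_right_cancel₀ h2ne
      rw [hz]; ring
    rw [hsymm, hch1, hm1]
    push_cast
    ring
  have hc2 : (((p-2).choose (p-3) : ℕ) : ZMod p) * (-1)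
      = ((-1:ℤ) : ZMod p) * ((p-2 : ℕ) : ZMod p) := by
    have hch : (p-2).choose (p-3) = p-2 := by
      rw [show p-3 = (p-2)-1 by omega, Nat.choose_symm (by omega), Nat.choose_one_right]
    rw [hch]
    push_cast
    ring
  have hpow : ((p:ℝ))^(-1:ℤ) = (p:ℝ)⁻¹ := by rw [zpow_neg, zpow_one]
  constructor
  · have h := key_cong (p := p) hp3 1 le_rfl (by omega) 1 hc1
    unfold Cz at h
    rw [hpow]
    simp only [show (3-1:ℕ) = 2 from by norm_num, Int.cast_one, one_mul] at h
    simp only [harmonic']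
    exact h
  · have h := key_cong (p := p) hp3 2 (by omega) le_rfl (-1) hc2
    unfold Cz at h
    rw [hpow]
    simp only [show (3-2:ℕ) = 1 from by norm_num, Int.cast_neg, Int.cast_one, neg_one_mul,
      pow_one] at h
    simp only [harmonic']
    exact h
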